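/- arXiv:1308.5170 — 3 statements merged into one kernel-verified Lean document; each statement's English description precedes it below -/
import Mathlib

section
/- Let G be a finite digraph and let G' be obtained from G by out-contracting an edge (u,v): delete u, and for every edge (x,u) add an edge (x,v), removing all edges incident to u. Then for any vertices a,b of G' (so a,b ≠ u), if there is a directed path from a to b in G', there is a directed path from a to b in G. In particular, out-contraction creates no new directed cycles among the surviving vertices. -/
/-- Out-contracting an edge `(u,v)` (delete `u`, redirect each edge
`(x,u)` to `(x,v)`, drop all edges incident to `u`) creates no new reachability:
any directed path between surviving vertices in the contracted graph yields a
directed path in the original graph. -/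
theorem out_contraction_reachability
    {V : Type*} [Fintype V] (E : V → V → Prop) (u v : V) (huv : E u v)
    (a b : V) (ha : a ≠ u) (hb : b ≠ u)
    (h : Relation.ReflTransGen
      (fun x y => x ≠ u ∧ y ≠ u ∧ (E x y ∨ (y = v ∧ E x u))) a b) :
    Relation.ReflTransGen E a b := by
  induction h with
  | refl => exact Relation.ReflTransGen.refl
  | tail _ hstep ih =>
    rcases hstep with ⟨hxu', _, hE | ⟨rfl, hxu⟩⟩
    · exact (ih hxu').tail hE
    · exact ((ih hxu').tail hxu).tail huv
end

section
/- If a digraph H is obtained from a digraph G by eliminating a vertex u of out-degree 0 (i.e., deleting u), then H is a directed minor of G, and if G has a directed elimination ordering of width ≤ k, then so does H with the width bound preserved; more precisely, G has an elimination ordering of width ≤ k if and only if G∖{u} does, when u has out-degree 0 in G. -/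
open Classical

/-- `ElimW E S k` : the digraph with edge relation `E` induced on the vertex set `S`
admits a directed elimination ordering of width ≤ `k`. -/
inductive ElimW {V : Type*} [DecidableEq V] : (V → V → Prop) → Finset V → ℕ → Prop where
  | empty : ∀ (E : V → V → Prop) (k : ℕ), ElimW E ∅ k
  | step : ∀ (E : V → V → Prop) (S : Finset V) (k : ℕ) (u : V), u ∈ S →
      ((S.erase u).filter (fun y => E u y)).card ≤ k →
      ElimW (fun x y => x ≠ y ∧ (E x y ∨ (E x u ∧ E u y))) (S.erase u) k →
      ElimW E S k

private lemma elimW_congr {V : Type*} [DecidableEq V] {E : V → V → Prop} {S : Finset V}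
    {k : ℕ} (hE : ElimW E S k) :
    ∀ E' : V → V → Prop, (∀ x y, x ∈ S → y ∈ S → x ≠ y → (E x y ↔ E' x y)) →
    ElimW E' S k := by
  induction hE with
  | empty E k => intro E' _; exact .empty E' k
  | step E S k u hu hcard hrec ih =>
    intro E' h
    refine .step E' S k u hu ?_ ?_
    · have : (S.erase u).filter (fun y => E' u y) = (S.erase u).filter (fun y => E u y) := by
        apply Finset.filter_congr
        intro y hy
        exact (h u y hu (Finset.mem_of_mem_erase hy) (Finset.ne_of_mem_erase hy).symm).symm
      simpa [this] using hcard
    · apply ih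
      intro x y hx hy hxy
      have hx' := Finset.mem_of_mem_erase hx
      have hy' := Finset.mem_of_mem_erase hy
      have hxu := Finset.ne_of_mem_erase hx
      have hyu := Finset.ne_of_mem_erase hy
      constructor
      · rintro ⟨-, hor⟩
        refine ⟨hxy, ?_⟩
        rcases hor with h1 | ⟨h1, h2⟩
        · exact Or.inl ((h x y hx' hy' hxy).1 h1)
        · exact Or.inr ⟨(h x u hx' hu hxu).1 h1, (h u y hu hy' (Ne.symm hyu)).1 h2⟩
      · rintro ⟨-, hor⟩
        refine ⟨hxy, ?_⟩
        rcases hor with h1 | ⟨h1, h2⟩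
        · exact Or.inl ((h x y hx' hy' hxy).2 h1)
        · exact Or.inr ⟨(h x u hx' hu hxu).2 h1, (h u y hu hy' (Ne.symm hyu)).2 h2⟩

private lemma elimW_erase_of_sink {V : Type*} [DecidableEq V] {E : V → V → Prop} {S : Finset V}
    {k : ℕ} (hE : ElimW E S k) :
    ∀ u : V, (∀ y, ¬ E u y) → ElimW E (S.erase u) k := by
  induction hE with
  | empty E k => intro u _; simp only [Finset.erase_empty]; exact .empty E k
  | step E S k v hv hcard hrec ih =>
    intro u hu
    by_cases huv : u = v
    · subst huv
      exact elimW_congr hrec E (fun x y _ _ hxy => by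
        constructor
        · rintro ⟨-, h1 | ⟨-, h2⟩⟩
          · exact h1
          · exact absurd h2 (hu y)
        · intro h1; exact ⟨hxy, Or.inl h1⟩)
    · have hu' : ∀ y, ¬ (fun x y => x ≠ y ∧ (E x y ∨ (E x v ∧ E v y))) u y := by
        rintro y ⟨-, h1 | ⟨h1, -⟩⟩
        · exact hu y h1
        · exact hu v h1
      have ihv := ih u hu'
      refine .step E (S.erase u) k v (Finset.mem_erase.2 ⟨Ne.symm huv, hv⟩) ?_ ?_
      · exact le_trans (Finset.card_le_card (Finset.filter_subset_filter _
          (Finset.erase_subset_erase v (Finset.erase_subset u S)))) hcard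
      · rw [Finset.erase_right_comm]
        exact ihv

/-- If `u` has out-degree 0 in `G`, then eliminating `u` is just
deleting `u`, and `G` admits a directed elimination ordering of width ≤ k iff
`G ∖ {u}` does. -/
theorem elimW_iff_of_sink
    {V : Type*} [Fintype V] [DecidableEq V] (E : V → V → Prop)
    (u : V) (hdeg : ∀ y, ¬ E u y) (k : ℕ) :
    ElimW E Finset.univ k ↔ ElimW E (Finset.univ.erase u) k := by
  constructor
  · intro h; exact elimW_erase_of_sink h u hdeg
  · intro h
    refine .step E Finset.univ k u (Finset.mem_univ u) ?_ ?_
    · simp [Finset.filter_eq_empty_iff.2 (fun y _ => hdeg y)]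
    · exact elimW_congr h _ (fun x y _ _ hxy => by
        constructor
        · intro h1; exact ⟨hxy, Or.inl h1⟩
        · rintro ⟨-, h1 | ⟨-, h2⟩⟩
          · exact h1
          · exact absurd h2 (hdeg y))
end

section
/- Let G be a finite digraph with all out-degrees exactly 2, let (u,v) be a single edge ((u,v) ∈ E, (v,u) ∉ E), and let G' be the out-contraction of (u,v). If G' has minimum out-degree ≥ 2 except for exactly one vertex of out-degree < 2, then that exceptional vertex w satisfies w ≠ v and the out-neighborhood of w in G is exactly {u, v}. -/
open Finset

/-- Let all out-degrees of `G` be exactly 2, `(u,v)` a single edge, and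
`G'` the out-contraction of `(u,v)`. If `w ≠ u, v` has out-degree 2 in `G` but
out-degree 1 in `G'`, then the out-neighborhood of `w` in `G` is exactly `{u, v}`. -/
theorem out_contraction_degree_drop
    {V : Type*} [Fintype V] [DecidableEq V]
    (E : V → V → Prop) [DecidableRel E]
    (u v w : V) (huv : E u v) (hvu : ¬ E v u) (hwu : w ≠ u) (hwv : w ≠ v)
    (hdegG : (univ.filter (fun y => E w y)).card = 2)
    (hdegG' : ((univ.erase u).filter (fun y => (E w y ∧ y ≠ u) ∨ (y = v ∧ E w u))).card = 1) :
    E w u ∧ E w v ∧ ∀ y, E w y → y = u ∨ y = v := by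
  have hvu' : v ≠ u := fun h => hvu (by subst h; exact huv)
  set T := ((univ.erase u).filter (fun y => (E w y ∧ y ≠ u) ∨ (y = v ∧ E w u))) with hT
  have hEwu : E w u := by
    by_contra h
    have hTS : T = univ.filter (fun y => E w y) := by
      ext y
      simp only [hT, mem_filter, mem_erase, mem_univ, true_and, and_true]
      constructor
      · rintro ⟨hyu, ⟨hy, _⟩ | ⟨rfl, hwu'⟩⟩
        · exact hy
        · exact absurd hwu' h
      · intro hy
        have : y ≠ u := fun e => h (e ▸ hy)
        exact ⟨this, Or.inl ⟨hy, this⟩⟩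
    rw [hTS, hdegG] at hdegG'
    exact absurd hdegG' (by norm_num)
  have hvT : v ∈ T := by
    exact mem_filter.mpr ⟨mem_erase.mpr ⟨hvu', mem_univ _⟩, Or.inr ⟨rfl, hEwu⟩⟩
  obtain ⟨a, ha⟩ := Finset.card_eq_one.mp hdegG'
  have hav : a = v := by rw [ha] at hvT; exact (Finset.mem_singleton.mp hvT).symm
  subst hav
  have hmem : ∀ y, E w y → y ≠ u → y = a := by
    intro y hy hyu
    have : y ∈ T := by
      exact mem_filter.mpr ⟨mem_erase.mpr ⟨hyu, mem_univ _⟩, Or.inl ⟨hy, hyu⟩⟩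
    rw [ha] at this
    exact Finset.mem_singleton.mp this
  have hEwv : E w a := by
    have hu : u ∈ univ.filter (fun y => E w y) := by simp [hEwu]
    have h1 : ((univ.filter (fun y => E w y)).erase u).card = 1 := by
      rw [Finset.card_erase_of_mem hu, hdegG]
    obtain ⟨y, hy⟩ := Finset.card_eq_one.mp h1
    have hyy : y ∈ (univ.filter (fun y => E w y)).erase u := by simp [hy]
    rw [mem_erase, mem_filter] at hyy
    have := hmem y hyy.2.2 hyy.1
    exact this ▸ hyy.2.2
  refine ⟨hEwu, hEwv, fun y hy => ?_⟩
  by_cases hyu : y = u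
  · exact Or.inl hyu
  · exact Or.inr (hmem y hy hyu)
end
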